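/- Let V be a finite set, and let S_1,…,S_m ⊆ V be nonempty subsets with |S_j| ≤ k for each j and such that every v ∈ V belongs to at most d of the sets S_j, where k,d ≥ 1 are integers. Let G be the dependency graph on vertex set [m] with an edge between distinct j, j' iff S_j ∩ S_{j'} ≠ ∅. Fix x ∈ V, let h > 0, and set β₀ = 1/(5·e·d·k·h). Then for every real r with 0 ≤ r < β₀, Σ_S (e^{rh} − 1)^{|S|} · exp(d·h·e²·r·|R_S|) ≤ e(e−1)·d·h·r, where the sum ranges over all nonempty subsets S ⊆ [m] such that G[S] is connected and x ∈ S_j for some j ∈ S, and R_S = ∪_{j∈S} S_j. -/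

import Mathlib

open Finset
open scoped Classical

namespace ClusterAux


variable {α : Type*} [Fintype α] [DecidableEq α] [LinearOrder α]

def HG (G : SimpleGraph α) (A : Finset α) : SimpleGraph α where
  Adj u v := G.Adj u v ∧ u ∈ A ∧ v ∈ A
  symm := ⟨fun u v ⟨h1, h2, h3⟩ => ⟨h1.symm, h3, h2⟩⟩
  loopless := ⟨fun u ⟨h1, _, _⟩ => G.irrefl h1⟩

lemma hg_adj {G : SimpleGraph α} {A : Finset α} {u v : α} :
    (HG G A).Adj u v ↔ G.Adj u v ∧ u ∈ A ∧ v ∈ A := Iff.rfl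

def conn (G : SimpleGraph α) (A : Finset α) : Prop :=
  A.Nonempty ∧ ∀ u ∈ A, ∀ v ∈ A, (HG G A).Reachable u v

lemma support_mem {G : SimpleGraph α} {A : Finset α} :
    ∀ {u v : α} (w : (HG G A).Walk u v), u ∈ A → ∀ x ∈ w.support, x ∈ A := by
  intro u v w
  induction w with
  | nil =>
    intro hu x hx
    simp only [SimpleGraph.Walk.support_nil, List.mem_singleton] at hx
    exact hx ▸ hu
  | cons hadj p ih =>
    intro hu x hx
    rw [SimpleGraph.Walk.support_cons, List.mem_cons] at hx
    rcases hx with rfl | hx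
    · exact hu
    · exact ih hadj.2.2 x hx

lemma walk_shrink {G : SimpleGraph α} {A C : Finset α} :
    ∀ {u v : α} (w : (HG G A).Walk u v), (∀ x ∈ w.support, x ∈ C) →
      (HG G C).Reachable u v := by
  intro u v w
  induction w with
  | nil => intro _; exact SimpleGraph.Reachable.refl _
  | cons hadj p ih =>
    intro hs
    rename_i a b c
    have hb : b ∈ (SimpleGraph.Walk.cons hadj p).support := by
      rw [SimpleGraph.Walk.support_cons]
      exact List.mem_cons_of_mem _ p.start_mem_support
    have ha : a ∈ (SimpleGraph.Walk.cons hadj p).support := SimpleGraph.Walk.start_mem_support _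
    have h1 : (HG G C).Adj a b := ⟨hadj.1, hs a ha, hs b hb⟩
    refine h1.reachable.trans (ih ?_)
    intro x hx
    exact hs x (by rw [SimpleGraph.Walk.support_cons]; exact List.mem_cons_of_mem _ hx)

/-- connectivity of induced graph implies our `conn`. -/
lemma conn_of_induce_connected {G : SimpleGraph α} {A : Finset α}
    (hA : (G.induce (A : Set α)).Connected) : conn G A := by
  have hne : A.Nonempty := by
    obtain ⟨⟨v, hv⟩⟩ := hA.nonempty
    exact ⟨v, by exact_mod_cast hv⟩
  refine ⟨hne, fun u hu v hv => ?_⟩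
  have hreach : (G.induce (A : Set α)).Reachable ⟨u, by exact_mod_cast hu⟩ ⟨v, by exact_mod_cast hv⟩ :=
    hA.preconnected _ _
  obtain ⟨w⟩ := hreach
  have key : ∀ (a b : (A : Set α)) (w : (G.induce (A : Set α)).Walk a b),
      (HG G A).Reachable a.val b.val := by
    intro a b w
    induction w with
    | nil => exact SimpleGraph.Reachable.refl _
    | @cons p q s hadj pw ih =>
      have h1 : (HG G A).Adj p.val q.val :=
        ⟨hadj, by exact_mod_cast p.2, by exact_mod_cast q.2⟩
      exact h1.reachable.trans ih
  exact key _ _ w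

noncomputable def comp (G : SimpleGraph α) (B : Finset α) (v : α) : Finset α :=
  B.filter (fun w => (HG G B).Reachable v w)

lemma mem_comp {G : SimpleGraph α} {B : Finset α} {v w : α} :
    w ∈ comp G B v ↔ w ∈ B ∧ (HG G B).Reachable v w := by
  simp [comp]

lemma comp_subset {G : SimpleGraph α} {B : Finset α} {v : α} : comp G B v ⊆ B :=
  filter_subset _ _

lemma self_mem_comp {G : SimpleGraph α} {B : Finset α} {v : α} (hv : v ∈ B) :
    v ∈ comp G B v := mem_comp.2 ⟨hv, SimpleGraph.Reachable.refl _⟩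

lemma comp_eq_of_mem {G : SimpleGraph α} {B : Finset α} {u v : α}
    (hu : u ∈ comp G B v) : comp G B u = comp G B v := by
  obtain ⟨huB, hr⟩ := mem_comp.1 hu
  ext w
  simp only [mem_comp]
  exact ⟨fun ⟨hw, h2⟩ => ⟨hw, hr.trans h2⟩, fun ⟨hw, h2⟩ => ⟨hw, hr.symm.trans h2⟩⟩

lemma comp_conn {G : SimpleGraph α} {B : Finset α} {v : α} (hv : v ∈ B) :
    conn G (comp G B v) := by
  refine ⟨⟨v, self_mem_comp hv⟩, fun a ha b hb => ?_⟩
  obtain ⟨haB, hra⟩ := mem_comp.1 ha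
  obtain ⟨hbB, hrb⟩ := mem_comp.1 hb
  obtain ⟨w⟩ := hra.symm.trans hrb
  refine walk_shrink w (fun x hx => ?_)
  have hxB : x ∈ B := support_mem w haB x hx
  have : (HG G B).Reachable a x := ⟨w.takeUntil x hx⟩
  exact mem_comp.2 ⟨hxB, hra.trans this⟩

lemma exists_nbr_aux (G : SimpleGraph α) (T : Finset α) (j : α) :
    ∀ {v t : α} (w : (HG G T).Walk v t), t = j → v ∈ T.erase j →
      ∃ u, G.Adj j u ∧ u ∈ T.erase j ∧ (HG G (T.erase j)).Reachable v u := by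
  intro v t w
  induction w with
  | nil =>
    intro ht hv
    subst ht
    exact absurd rfl (Finset.ne_of_mem_erase hv)
  | @cons a b c hadj p ih =>
    intro ht hv
    subst ht
    by_cases hb : b = c
    · subst hb
      exact ⟨a, hadj.1.symm, hv, SimpleGraph.Reachable.refl _⟩
    · have hbT : b ∈ T.erase c := Finset.mem_erase.2 ⟨hb, hadj.2.2⟩
      obtain ⟨u, h1, h2, h3⟩ := ih rfl hbT
      refine ⟨u, h1, h2, ?_⟩
      have : (HG G (T.erase c)).Adj a b := ⟨hadj.1, hv, hbT⟩
      exact this.reachable.trans h3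

lemma exists_nbr {G : SimpleGraph α} {T : Finset α} {j : α}
    (hconn : conn G T) (hj : j ∈ T) {v : α} (hv : v ∈ T.erase j) :
    ∃ u, G.Adj j u ∧ u ∈ comp G (T.erase j) v := by
  obtain ⟨w⟩ := hconn.2 v (Finset.mem_of_mem_erase hv) j hj
  obtain ⟨u, h1, h2, h3⟩ := exists_nbr_aux G T j w rfl hv
  exact ⟨u, h1, mem_comp.2 ⟨h2, h3⟩⟩

noncomputable def rep (G : SimpleGraph α) (B : Finset α) (j : α) (u : α) : Finset α :=
  if G.Adj j u ∧ u ∈ B ∧ ∀ u' ∈ comp G B u, G.Adj j u' → u ≤ u' then comp G B u else ∅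

lemma rep_subset {G : SimpleGraph α} {B : Finset α} {j u : α} : rep G B j u ⊆ B := by
  unfold rep; split
  · exact comp_subset
  · exact Finset.empty_subset _

lemma rep_cover {G : SimpleGraph α} {T : Finset α} {j : α}
    (hconn : conn G T) (hj : j ∈ T) :
    Finset.univ.biUnion (rep G (T.erase j) j) = T.erase j := by
  apply Finset.Subset.antisymm
  · intro v hv
    obtain ⟨u, _, hv2⟩ := Finset.mem_biUnion.1 hv
    exact rep_subset hv2
  · intro v hv
    obtain ⟨u0, hu0adj, hu0c⟩ := exists_nbr hconn hj hv
    set B := T.erase j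
    set F := (comp G B v).filter (fun u' => G.Adj j u') with hF
    have hFne : F.Nonempty := ⟨u0, Finset.mem_filter.2 ⟨hu0c, hu0adj⟩⟩
    set u := F.min' hFne with hu
    have huF : u ∈ F := F.min'_mem hFne
    have huc : u ∈ comp G B v := (Finset.mem_filter.1 huF).1
    have huadj : G.Adj j u := (Finset.mem_filter.1 huF).2
    have hcomp : comp G B u = comp G B v := comp_eq_of_mem huc
    have huB : u ∈ B := comp_subset huc
    have hcond : G.Adj j u ∧ u ∈ B ∧ ∀ u' ∈ comp G B u, G.Adj j u' → u ≤ u' := by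
      refine ⟨huadj, huB, fun u' hu' hadj' => ?_⟩
      exact F.min'_le u' (Finset.mem_filter.2 ⟨hcomp ▸ hu', hadj'⟩)
    refine Finset.mem_biUnion.2 ⟨u, Finset.mem_univ u, ?_⟩
    rw [rep, if_pos hcond, hcomp]
    exact self_mem_comp hv

lemma rep_disjoint {G : SimpleGraph α} {B : Finset α} {j : α} {u u' : α} (hne : u ≠ u') :
    Disjoint (rep G B j u) (rep G B j u') := by
  by_contra hdisj
  obtain ⟨x, hx1, hx2⟩ := Finset.not_disjoint_iff.1 hdisj
  unfold rep at hx1 hx2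
  split at hx1
  case isFalse => simp at hx1
  case isTrue hc1 =>
  split at hx2
  case isFalse => simp at hx2
  case isTrue hc2 =>
  have heq : comp G B u = comp G B u' := by
    rw [← comp_eq_of_mem hx1, ← comp_eq_of_mem hx2]
  have h1 : u ≤ u' := hc1.2.2 u' (by rw [heq]; exact self_mem_comp hc2.2.1) hc2.1
  have h2 : u' ≤ u := hc2.2.2 u (by rw [← heq]; exact self_mem_comp hc1.2.1) hc1.1
  exact hne (le_antisymm h1 h2)


lemma key (G : SimpleGraph α) (a c : ℝ) (ha0 : 0 ≤ a) (hc0 : 0 ≤ c) (Δ : ℕ)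
    (hdegG : ∀ j : α, (univ.filter (fun u => G.Adj j u)).card ≤ Δ)
    (hrec : a * (1 + c) ^ Δ ≤ c) :
    ∀ n : ℕ, ∀ j : α,
      ∑ T ∈ univ.powerset.filter (fun T => j ∈ T ∧ conn G T ∧ T.card ≤ n),
        a ^ T.card ≤ c := by
  intro n
  induction n with
  | zero =>
    intro j
    have hempty : univ.powerset.filter
        (fun T : Finset α => j ∈ T ∧ conn G T ∧ T.card ≤ 0) = ∅ := by
      ext T
      simp only [mem_filter, Finset.notMem_empty, iff_false]
      rintro ⟨-, hj, -, hcard⟩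
      rw [Nat.le_zero, Finset.card_eq_zero] at hcard
      exact absurd (hcard ▸ hj) (Finset.notMem_empty j)
    rw [hempty, Finset.sum_empty]
    exact hc0
  | succ n ih =>
    intro j
    set A := univ.powerset.filter
      (fun T : Finset α => j ∈ T ∧ conn G T ∧ T.card ≤ n + 1) with hAdef
    set opts : α → Finset (Finset α) := fun u =>
      if G.Adj j u then insert ∅ (univ.powerset.filter
        (fun C => conn G C ∧ u ∈ C ∧ j ∉ C ∧ C.card ≤ n)) else {∅} with hoptsdef
    set ι : Finset α → (α → Finset α) := fun T u => rep G (T.erase j) j u with hιdef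
    -- facts about elements of A
    have hAmem : ∀ T ∈ A, j ∈ T ∧ conn G T ∧ T.card ≤ n + 1 := by
      intro T hT; exact (mem_filter.1 hT).2
    have hrecover : ∀ T ∈ A, insert j (Finset.univ.biUnion (ι T)) = T := by
      intro T hT
      obtain ⟨hj, hconn, _⟩ := hAmem T hT
      rw [hιdef]
      rw [rep_cover hconn hj, Finset.insert_erase hj]
    -- Step A : rewrite each term
    have hcardT : ∀ T ∈ A, T.card = (∑ u : α, ((ι T) u).card) + 1 := by
      intro T hT
      obtain ⟨hj, hconn, _⟩ := hAmem T hT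
      have hdisj : ∀ u ∈ (univ : Finset α), ∀ u' ∈ (univ : Finset α), u ≠ u' →
          Disjoint (ι T u) (ι T u') := fun u _ u' _ hne => rep_disjoint hne
      have h1 : (Finset.univ.biUnion (ι T)).card = ∑ u : α, ((ι T) u).card :=
        Finset.card_biUnion hdisj
      have h2 : (Finset.univ.biUnion (ι T)) = T.erase j := rep_cover hconn hj
      rw [h2] at h1
      rw [← h1, Finset.card_erase_of_mem hj]
      have : 1 ≤ T.card := Finset.card_pos.2 ⟨j, hj⟩
      omega
    have hterm : ∀ T ∈ A, a ^ T.card = a * ∏ u : α, a ^ ((ι T) u).card := by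
      intro T hT
      rw [hcardT T hT, pow_succ, Finset.prod_pow_eq_pow_sum, mul_comm]
    -- Step B : injectivity and membership
    have hinj : ∀ T₁ ∈ A, ∀ T₂ ∈ A, ι T₁ = ι T₂ → T₁ = T₂ := by
      intro T₁ h₁ T₂ h₂ heq
      rw [← hrecover T₁ h₁, ← hrecover T₂ h₂, heq]
    have hmap : ∀ T ∈ A, ι T ∈ Fintype.piFinset opts := by
      intro T hT
      obtain ⟨hj, hconn, hcard⟩ := hAmem T hT
      rw [Fintype.mem_piFinset]
      intro u
      rw [hιdef]
      simp only []
      rw [rep]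
      split
      case isTrue hcond =>
        obtain ⟨hadj, huB, _⟩ := hcond
        rw [hoptsdef]
        simp only [if_pos hadj]
        apply Finset.mem_insert_of_mem
        rw [mem_filter]
        refine ⟨Finset.mem_powerset.2 (Finset.subset_univ _), comp_conn huB,
          self_mem_comp huB, ?_, ?_⟩
        · intro hjc
          exact (Finset.mem_erase.1 (comp_subset hjc)).1 rfl
        · have h1 : (comp G (T.erase j) u).card ≤ (T.erase j).card :=
            Finset.card_le_card comp_subset
          have h2 : (T.erase j).card = T.card - 1 := Finset.card_erase_of_mem hj
          omega
      case isFalse =>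
        rw [hoptsdef]
        simp only []
        split
        · exact Finset.mem_insert_self _ _
        · exact Finset.mem_singleton_self _
    -- Step C : the chain of bounds
    have step1 : ∑ T ∈ A, a ^ T.card = ∑ T ∈ A, a * ∏ u : α, a ^ ((ι T) u).card :=
      Finset.sum_congr rfl hterm
    have step2 : ∑ T ∈ A, a * ∏ u : α, a ^ ((ι T) u).card
        = ∑ g ∈ A.image ι, a * ∏ u : α, a ^ (g u).card := by
      rw [Finset.sum_image hinj]
    have step3 : ∑ g ∈ A.image ι, a * ∏ u : α, a ^ (g u).card
        ≤ ∑ g ∈ Fintype.piFinset opts, a * ∏ u : α, a ^ (g u).card := by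
      apply Finset.sum_le_sum_of_subset_of_nonneg
      · intro g hg
        obtain ⟨T, hT, rfl⟩ := Finset.mem_image.1 hg
        exact hmap T hT
      · intro g _ _
        positivity
    have step4 : ∑ g ∈ Fintype.piFinset opts, a * ∏ u : α, a ^ (g u).card
        = a * ∏ u : α, ∑ C ∈ opts u, a ^ C.card := by
      rw [← Finset.mul_sum, Finset.prod_univ_sum]
    -- per-u bound
    have hfac : ∀ u : α, ∑ C ∈ opts u, a ^ C.card ≤ if G.Adj j u then 1 + c else 1 := by
      intro u
      rw [hoptsdef]
      simp only []
      split
      case isTrue hadj =>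
        have hne : (∅ : Finset α) ∉ univ.powerset.filter
            (fun C : Finset α => conn G C ∧ u ∈ C ∧ j ∉ C ∧ C.card ≤ n) := by
          intro hmem
          exact absurd (mem_filter.1 hmem).2.2.1 (Finset.notMem_empty u)
        rw [Finset.sum_insert hne, Finset.card_empty, pow_zero]
        have hsub : univ.powerset.filter
            (fun C : Finset α => conn G C ∧ u ∈ C ∧ j ∉ C ∧ C.card ≤ n)
            ⊆ univ.powerset.filter (fun C : Finset α => u ∈ C ∧ conn G C ∧ C.card ≤ n) := by
          intro C hC
          obtain ⟨h1, h2, h3, _, h5⟩ := mem_filter.1 hC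
          exact mem_filter.2 ⟨h1, h3, h2, h5⟩
        have hZ : ∑ C ∈ univ.powerset.filter
            (fun C : Finset α => conn G C ∧ u ∈ C ∧ j ∉ C ∧ C.card ≤ n), a ^ C.card ≤ c := by
          refine le_trans (Finset.sum_le_sum_of_subset_of_nonneg hsub ?_) (ih u)
          intro C _ _
          positivity
        linarith
      case isFalse =>
        rw [Finset.sum_singleton, Finset.card_empty, pow_zero]
    have step5 : ∏ u : α, ∑ C ∈ opts u, a ^ C.card ≤ (1 + c) ^ Δ := by
      have h1 : ∏ u : α, ∑ C ∈ opts u, a ^ C.card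
          ≤ ∏ u : α, (if G.Adj j u then 1 + c else 1) := by
        apply Finset.prod_le_prod
        · intro u _
          apply Finset.sum_nonneg
          intro C _
          positivity
        · intro u _
          exact hfac u
      have h2 : ∏ u : α, (if G.Adj j u then 1 + c else 1)
          = (1 + c) ^ (univ.filter (fun u => G.Adj j u)).card := by
        rw [Finset.prod_ite, Finset.prod_const, Finset.prod_const, one_pow, mul_one]
      have h3 : (1 + c) ^ (univ.filter (fun u => G.Adj j u)).card ≤ (1 + c) ^ Δ := by
        apply pow_le_pow_right₀ (by linarith) (hdegG j)
      linarith
    calc ∑ T ∈ A, a ^ T.card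
        ≤ a * ∏ u : α, ∑ C ∈ opts u, a ^ C.card := by
          rw [step1, step2, ← step4]; exact step3
      _ ≤ a * ((1 + c) ^ Δ) := by
          apply mul_le_mul_of_nonneg_left step5 ha0
      _ ≤ c := hrec


end ClusterAux


set_option maxHeartbeats 1000000 in
lemma cluster_arith (k d : ℕ) (hk : 1 ≤ k) (hd : 1 ≤ d) (h r : ℝ) (hh : 0 < h) (hr0 : 0 ≤ r)
    (hs : (d : ℝ) * k * h * r < 1 / (5 * Real.exp 1)) :
    ((Real.exp (r * h) - 1) * Real.exp ((d : ℝ) * h * (Real.exp 1) ^ 2 * r * k)) *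
      (1 + Real.exp 1 * (Real.exp 1 - 1) * h * r) ^ (k * d)
      ≤ Real.exp 1 * (Real.exp 1 - 1) * h * r := by
  set E := Real.exp 1 with hE
  have hE1 : (2.7182818283 : ℝ) < E := Real.exp_one_gt_d9
  have hE2 : E < 2.7182818286 := Real.exp_one_lt_d9
  have hd1 : (1 : ℝ) ≤ (d : ℝ) := by exact_mod_cast hd
  have hk1 : (1 : ℝ) ≤ (k : ℝ) := by exact_mod_cast hk
  set c := E * (E - 1) * h * r with hc
  set s := (d : ℝ) * k * h * r with hsdef
  have hhr0 : 0 ≤ h * r := by positivity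
  have hE3 : (0:ℝ) ≤ E * (E - 1) := by nlinarith
  have hc0 : 0 ≤ c := by
    rw [hc, mul_assoc]
    exact mul_nonneg hE3 (mul_nonneg hh.le hr0)
  have hs0 : 0 ≤ s := by rw [hsdef]; positivity
  have hdk1 : (1:ℝ) ≤ (d:ℝ) * (k:ℝ) := by nlinarith
  have hrh_le_s : r * h ≤ s := by
    rw [hsdef]
    nlinarith [mul_nonneg hhr0 (by linarith : (0:ℝ) ≤ (d:ℝ) * (k:ℝ) - 1)]
  -- 1 : exp(rh) - 1 ≤ rh exp(rh)
  have hexp1 : Real.exp (r * h) - 1 ≤ r * h * Real.exp (r * h) := by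
    have h1 := Real.add_one_le_exp (-(r * h))
    rw [Real.exp_neg] at h1
    have h2 := Real.exp_pos (r * h)
    have h3 : (Real.exp (r * h))⁻¹ * Real.exp (r * h) = 1 := inv_mul_cancel₀ (ne_of_gt h2)
    nlinarith
  have hexp0 : 0 ≤ Real.exp (r * h) - 1 := by
    have : (1 : ℝ) ≤ Real.exp (r * h) := Real.one_le_exp (by positivity)
    linarith
  -- 2 : (1+c)^(kd) ≤ exp (c * (k*d))
  have hpow : (1 + c) ^ (k * d) ≤ Real.exp (c * (k * d)) := by
    calc (1 + c) ^ (k * d) ≤ (Real.exp c) ^ (k * d) := by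
          apply pow_le_pow_left₀ (by linarith) (by linarith [Real.add_one_le_exp c])
      _ = Real.exp (c * (k * d)) := by
          rw [← Real.exp_nat_mul, mul_comm]
          push_cast
          ring_nf
  -- combine
  have hcomb : ((Real.exp (r * h) - 1) * Real.exp ((d : ℝ) * h * E ^ 2 * r * k)) *
      (1 + c) ^ (k * d)
      ≤ (r * h * Real.exp (r * h)) * Real.exp ((d : ℝ) * h * E ^ 2 * r * k) *
        Real.exp (c * (k * d)) := by
    have e2 : (0:ℝ) ≤ Real.exp ((d : ℝ) * h * E ^ 2 * r * k) := le_of_lt (Real.exp_pos _)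
    have e3 : (0:ℝ) ≤ (1 + c) ^ (k * d) := by positivity
    have hmul1 : (Real.exp (r * h) - 1) * Real.exp ((d : ℝ) * h * E ^ 2 * r * k)
        ≤ (r * h * Real.exp (r * h)) * Real.exp ((d : ℝ) * h * E ^ 2 * r * k) :=
      mul_le_mul_of_nonneg_right hexp1 e2
    have hnn : 0 ≤ (r * h * Real.exp (r * h)) * Real.exp ((d : ℝ) * h * E ^ 2 * r * k) := by
      positivity
    calc ((Real.exp (r * h) - 1) * Real.exp ((d : ℝ) * h * E ^ 2 * r * k)) * (1 + c) ^ (k * d)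
        ≤ ((r * h * Real.exp (r * h)) * Real.exp ((d : ℝ) * h * E ^ 2 * r * k)) *
          (1 + c) ^ (k * d) := mul_le_mul_of_nonneg_right hmul1 e3
      _ ≤ ((r * h * Real.exp (r * h)) * Real.exp ((d : ℝ) * h * E ^ 2 * r * k)) *
          Real.exp (c * (k * d)) := mul_le_mul_of_nonneg_left hpow hnn
  -- exponent bound
  have hX : r * h + (d : ℝ) * h * E ^ 2 * r * k + c * (k * d) ≤ 1 := by
    have e1 : (d : ℝ) * h * E ^ 2 * r * k = s * E ^ 2 := by rw [hsdef]; ring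
    have e2 : c * ((k : ℝ) * d) = s * (E * (E - 1)) := by rw [hc, hsdef]; ring
    have e3 : r * h + (d : ℝ) * h * E ^ 2 * r * k + c * (k * d) ≤ s * (1 + 2 * E ^ 2 - E) := by
      rw [e1]
      have e2' : c * ((k : ℝ) * (d : ℝ)) = s * (E * (E - 1)) := by rw [hc, hsdef]; ring
      push_cast
      rw [e2']
      ring_nf
      nlinarith [hrh_le_s]
    have hE0 : (0:ℝ) < E := by linarith
    have e4 : 1 + 2 * E ^ 2 - E ≤ 5 * E := by
      nlinarith [mul_lt_mul_of_pos_left hE2 hE0]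
    have hEpos : (0 : ℝ) < 5 * E := by linarith
    have e5 : s * (5 * E) < 1 := by
      have := (lt_div_iff₀ hEpos).1 hs
      linarith
    have e6 : s * (1 + 2 * E ^ 2 - E) ≤ s * (5 * E) := mul_le_mul_of_nonneg_left e4 hs0
    linarith
  have hfin : (r * h * Real.exp (r * h)) * Real.exp ((d : ℝ) * h * E ^ 2 * r * k) *
      Real.exp (c * (k * d)) ≤ r * h * Real.exp 1 := by
    have hrh0 : 0 ≤ r * h := by positivity
    rw [mul_assoc (r * h), mul_assoc, ← Real.exp_add, ← Real.exp_add]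
    apply mul_le_mul_of_nonneg_left _ hrh0
    exact Real.exp_le_exp.2 (by linarith [hX])
  have hlast : r * h * Real.exp 1 ≤ c := by
    rw [hc, ← hE]; nlinarith
  calc ((Real.exp (r * h) - 1) * Real.exp ((d : ℝ) * h * E ^ 2 * r * k)) * (1 + c) ^ (k * d)
      ≤ (r * h * Real.exp (r * h)) * Real.exp ((d : ℝ) * h * E ^ 2 * r * k) *
        Real.exp (c * (k * d)) := hcomb
    _ ≤ r * h * Real.exp 1 := hfin
    _ ≤ c := hlast


lemma sum_biUnion_le_double {β γ : Type*} [DecidableEq β] [DecidableEq γ]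
    (J : Finset β) (t : β → Finset γ) (f : γ → ℝ) (hf : ∀ x, 0 ≤ f x) :
    ∑ x ∈ J.biUnion t, f x ≤ ∑ j ∈ J, ∑ x ∈ t j, f x := by
  induction J using Finset.induction with
  | empty => simp
  | @insert b Jb hb ih =>
    rw [Finset.biUnion_insert, Finset.sum_insert hb]
    have h1 : ∑ x ∈ t b ∪ Jb.biUnion t, f x ≤ ∑ x ∈ t b, f x + ∑ x ∈ Jb.biUnion t, f x := by
      have h2 := Finset.sum_union_inter (s₁ := t b) (s₂ := Jb.biUnion t) (f := f)
      have h3 : 0 ≤ ∑ x ∈ t b ∩ Jb.biUnion t, f x := Finset.sum_nonneg fun x _ => hf x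
      linarith
    linarith [ih]

/-- **The key cluster-expansion estimate (Lemma 27 of Harrow–Mehraban–Soleimanifar).**
For sets `S_1,…,S_m ⊆ V` of size at most `k` with each site in at most `d` of them, the
dependency graph `G` on `[m]` (edges between intersecting sets), a fixed site `x` and
`β₀ = 1/(5edkh)`: for every `0 ≤ r < β₀`,
`Σ_T (e^{rh}−1)^{|T|} exp(d·h·e²·r·|R_T|) ≤ e(e−1)·d·h·r`, the sum over nonempty `T ⊆ [m]`
with `G[T]` connected and `x ∈ S_j` for some `j ∈ T`, where `R_T = ∪_{j∈T} S_j`. -/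
theorem cluster_expansion_sum_bound
    {V : Type*} [Fintype V] [DecidableEq V]
    (m k d : ℕ) (hk : 1 ≤ k) (hd : 1 ≤ d)
    (S : Fin m → Finset V)
    (hSne : ∀ j, (S j).Nonempty)
    (hcard : ∀ j, (S j).card ≤ k)
    (hdeg : ∀ v : V, (Finset.univ.filter fun j => v ∈ S j).card ≤ d)
    (G : SimpleGraph (Fin m))
    (hG : ∀ j j', G.Adj j j' ↔ j ≠ j' ∧ (S j ∩ S j').Nonempty)
    (x : V) (h : ℝ) (hh : 0 < h)
    (β₀ : ℝ) (hβ₀ : β₀ = 1 / (5 * Real.exp 1 * d * k * h))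
    (r : ℝ) (hr0 : 0 ≤ r) (hr : r < β₀) :
    ∑ T ∈ (Finset.univ : Finset (Fin m)).powerset,
        (if T.Nonempty ∧ (∃ j ∈ T, x ∈ S j) ∧ (G.induce (T : Set (Fin m))).Connected then
          (Real.exp (r * h) - 1) ^ T.card *
            Real.exp (d * h * (Real.exp 1) ^ 2 * r * (T.biUnion S).card)
        else 0) ≤
      Real.exp 1 * (Real.exp 1 - 1) * d * h * r := by
  classical
  set E := Real.exp 1 with hE
  set a : ℝ := (Real.exp (r * h) - 1) * Real.exp ((d : ℝ) * h * E ^ 2 * r * k) with ha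
  set c : ℝ := E * (E - 1) * h * r with hc
  have hE1 : (2.7182818283 : ℝ) < E := Real.exp_one_gt_d9
  have hE2 : E < 2.7182818286 := Real.exp_one_lt_d9
  have hexp0 : 0 ≤ Real.exp (r * h) - 1 := by
    have : (1 : ℝ) ≤ Real.exp (r * h) := Real.one_le_exp (by positivity)
    linarith
  have ha0 : 0 ≤ a := by
    rw [ha]; exact mul_nonneg hexp0 (Real.exp_pos _).le
  have hc0 : 0 ≤ c := by
    rw [hc]
    have h1 : (0 : ℝ) ≤ E * (E - 1) := by nlinarith
    rw [mul_assoc]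
    exact mul_nonneg h1 (mul_nonneg hh.le hr0)
  have hd1 : (1 : ℝ) ≤ (d : ℝ) := by exact_mod_cast hd
  have hk1 : (1 : ℝ) ≤ (k : ℝ) := by exact_mod_cast hk
  -- s < 1/(5E)
  have hs : (d : ℝ) * k * h * r < 1 / (5 * E) := by
    rw [hβ₀] at hr
    have hdkh : (0 : ℝ) < (d : ℝ) * k * h := by positivity
    have h5E : (0 : ℝ) < 5 * E := by linarith
    have key := mul_lt_mul_of_pos_left hr hdkh
    have heq : (d : ℝ) * k * h * (1 / (5 * E * d * k * h)) = 1 / (5 * E) := by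
      field_simp
    rw [heq] at key
    linarith [key]
  have hrec : a * (1 + c) ^ (k * d) ≤ c := cluster_arith k d hk hd h r hh hr0 hs
  -- degree bound for the dependency graph
  have hdegG : ∀ j : Fin m, ((Finset.univ : Finset (Fin m)).filter
      (fun u => G.Adj j u)).card ≤ k * d := by
    intro j
    have hsub : (Finset.univ : Finset (Fin m)).filter (fun u => G.Adj j u)
        ⊆ (S j).biUnion (fun v => Finset.univ.filter (fun u : Fin m => v ∈ S u)) := by
      intro u hu
      have hadj := (Finset.mem_filter.1 hu).2
      obtain ⟨hne, v, hv⟩ := (hG j u).1 hadj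
      rw [Finset.mem_inter] at hv
      exact Finset.mem_biUnion.2 ⟨v, hv.1, Finset.mem_filter.2 ⟨Finset.mem_univ _, hv.2⟩⟩
    calc ((Finset.univ : Finset (Fin m)).filter (fun u => G.Adj j u)).card
        ≤ ((S j).biUnion (fun v => Finset.univ.filter (fun u : Fin m => v ∈ S u))).card :=
          Finset.card_le_card hsub
      _ ≤ ∑ v ∈ S j, (Finset.univ.filter (fun u : Fin m => v ∈ S u)).card :=
          Finset.card_biUnion_le
      _ ≤ ∑ _v ∈ S j, d := Finset.sum_le_sum fun v _ => hdeg v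
      _ = (S j).card * d := by rw [Finset.sum_const, smul_eq_mul]
      _ ≤ k * d := Nat.mul_le_mul_right d (hcard j)
  have hkey := ClusterAux.key G a c ha0 hc0 (k * d) hdegG hrec m
  -- pointwise weight bound
  have hw : ∀ T : Finset (Fin m),
      (Real.exp (r * h) - 1) ^ T.card *
        Real.exp ((d : ℝ) * h * E ^ 2 * r * (T.biUnion S).card) ≤ a ^ T.card := by
    intro T
    have hN : (T.biUnion S).card ≤ k * T.card := by
      calc (T.biUnion S).card ≤ ∑ j ∈ T, (S j).card := Finset.card_biUnion_le
        _ ≤ ∑ _j ∈ T, k := Finset.sum_le_sum fun j _ => hcard j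
        _ = T.card * k := by rw [Finset.sum_const, smul_eq_mul]
        _ = k * T.card := Nat.mul_comm _ _
    have hNr : ((T.biUnion S).card : ℝ) ≤ (k : ℝ) * T.card := by exact_mod_cast hN
    have hcoef : (0 : ℝ) ≤ (d : ℝ) * h * E ^ 2 * r := by positivity
    have hmono : (d : ℝ) * h * E ^ 2 * r * (T.biUnion S).card
        ≤ (d : ℝ) * h * E ^ 2 * r * k * T.card := by
      have := mul_le_mul_of_nonneg_left hNr hcoef
      calc (d : ℝ) * h * E ^ 2 * r * (T.biUnion S).card
          ≤ (d : ℝ) * h * E ^ 2 * r * ((k : ℝ) * T.card) := this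
        _ = (d : ℝ) * h * E ^ 2 * r * k * T.card := by ring
    have h2 : Real.exp ((d : ℝ) * h * E ^ 2 * r * (T.biUnion S).card)
        ≤ (Real.exp ((d : ℝ) * h * E ^ 2 * r * k)) ^ T.card := by
      calc Real.exp ((d : ℝ) * h * E ^ 2 * r * (T.biUnion S).card)
          ≤ Real.exp ((d : ℝ) * h * E ^ 2 * r * k * T.card) := Real.exp_le_exp.2 hmono
        _ = (Real.exp ((d : ℝ) * h * E ^ 2 * r * k)) ^ T.card := by
            have hnm := Real.exp_nat_mul ((d : ℝ) * h * E ^ 2 * r * (k : ℝ)) T.card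
            rw [← hnm]
            congr 1
            ring
    calc (Real.exp (r * h) - 1) ^ T.card *
          Real.exp ((d : ℝ) * h * E ^ 2 * r * (T.biUnion S).card)
        ≤ (Real.exp (r * h) - 1) ^ T.card *
          (Real.exp ((d : ℝ) * h * E ^ 2 * r * k)) ^ T.card :=
          mul_le_mul_of_nonneg_left h2 (pow_nonneg hexp0 _)
      _ = a ^ T.card := by rw [ha, mul_pow]
  -- assemble
  set P : Finset (Fin m) → Prop := fun T =>
    T.Nonempty ∧ (∃ j ∈ T, x ∈ S j) ∧ (G.induce (T : Set (Fin m))).Connected with hP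
  set J : Finset (Fin m) := Finset.univ.filter (fun j => x ∈ S j) with hJ
  set t : Fin m → Finset (Finset (Fin m)) := fun j =>
    Finset.univ.powerset.filter
      (fun T => j ∈ T ∧ ClusterAux.conn G T ∧ T.card ≤ m) with ht
  have hrw : ∑ T ∈ (Finset.univ : Finset (Fin m)).powerset,
      (if P T then (Real.exp (r * h) - 1) ^ T.card *
          Real.exp ((d:ℝ) * h * E ^ 2 * r * (T.biUnion S).card) else 0)
      = ∑ T ∈ (Finset.univ : Finset (Fin m)).powerset.filter P,
          (Real.exp (r * h) - 1) ^ T.card *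
          Real.exp ((d:ℝ) * h * E ^ 2 * r * (T.biUnion S).card) :=
    (Finset.sum_filter _ _).symm
  rw [hrw]
  have hsubset : (Finset.univ : Finset (Fin m)).powerset.filter P ⊆ J.biUnion t := by
    intro T hT
    obtain ⟨hTp, hne, ⟨j, hjT, hxj⟩, hconnI⟩ := Finset.mem_filter.1 hT
    refine Finset.mem_biUnion.2 ⟨j, Finset.mem_filter.2 ⟨Finset.mem_univ _, hxj⟩, ?_⟩
    refine Finset.mem_filter.2 ⟨hTp, hjT, ClusterAux.conn_of_induce_connected hconnI, ?_⟩
    calc T.card ≤ Fintype.card (Fin m) := Finset.card_le_univ T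
      _ = m := Fintype.card_fin m
  have hJcard : J.card ≤ d := hdeg x
  calc ∑ T ∈ (Finset.univ : Finset (Fin m)).powerset.filter P,
        (Real.exp (r * h) - 1) ^ T.card *
          Real.exp ((d:ℝ) * h * E ^ 2 * r * (T.biUnion S).card)
      ≤ ∑ T ∈ (Finset.univ : Finset (Fin m)).powerset.filter P, a ^ T.card :=
        Finset.sum_le_sum fun T _ => hw T
    _ ≤ ∑ T ∈ J.biUnion t, a ^ T.card := by
        apply Finset.sum_le_sum_of_subset_of_nonneg hsubset
        intro T _ _
        positivity
    _ ≤ ∑ j ∈ J, ∑ T ∈ t j, a ^ T.card :=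
        sum_biUnion_le_double J t _ (fun T => by positivity)
    _ ≤ ∑ _j ∈ J, c := Finset.sum_le_sum fun j _ => hkey j
    _ = J.card * c := by rw [Finset.sum_const, nsmul_eq_mul]
    _ ≤ (d : ℝ) * c := by
        have : (J.card : ℝ) ≤ (d : ℝ) := by exact_mod_cast hJcard
        exact mul_le_mul_of_nonneg_right this hc0
    _ = Real.exp 1 * (Real.exp 1 - 1) * d * h * r := by rw [hc, ← hE]; ring
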